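/- Let a, b be points at distance D apart with 0 < ω ≤ D ≤ 2r, and let θ = arccos(D/(2r)). Then the area of the lens-shaped intersection of the two closed disks of radius r centered at a and b equals 2r²(θ - sinθ·cosθ). -/

import Mathlib

open Real MeasureTheory

theorem key_deriv (r c : ℝ) (hr : 0 < r) (x : ℝ) (hx1 : -r < x) (hx2 : x < r) :
    HasDerivAt (fun x : ℝ => (x * Real.sqrt (r^2 - x^2) + r^2 * Real.arcsin (x/r))/2)
      (Real.sqrt (r^2 - x^2)) x := by
  have hpos : 0 < r^2 - x^2 := by nlinarith
  have hs : HasDerivAt (fun x : ℝ => Real.sqrt (r^2 - x^2)) (1 / (2 * Real.sqrt (r^2 - x^2)) * (-(2*x))) x := by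
    have h1 : HasDerivAt (fun x : ℝ => r^2 - x^2) (-(2*x)) x := by
      simpa using ((hasDerivAt_pow 2 x).const_sub (r^2))
    exact (Real.hasDerivAt_sqrt hpos.ne').comp x h1
  have ha : HasDerivAt (fun x : ℝ => Real.arcsin (x/r)) ((1 / Real.sqrt (1 - (x/r)^2)) * (1/r)) x := by
    have h1 : HasDerivAt (fun x : ℝ => x/r) (1/r) x := (hasDerivAt_id x).div_const r
    have hne1 : x/r ≠ -1 := by
      intro h; rw [div_eq_iff hr.ne'] at h; simp at h; linarith
    have hne2 : x/r ≠ 1 := by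
      intro h; rw [div_eq_iff hr.ne'] at h; simp at h; linarith
    exact (Real.hasDerivAt_arcsin hne1 hne2).comp x h1
  have := (((hasDerivAt_id x).mul hs).add (ha.const_mul (r^2))).div_const 2
  convert this using 1
  · rfl
  · rfl
  · rfl
  simp only [id]
  have hsq : 0 < Real.sqrt (r^2 - x^2) := Real.sqrt_pos.mpr hpos
  have h1 : Real.sqrt (1 - (x/r)^2) = Real.sqrt (r^2 - x^2) / r := by
    have : 1 - (x/r)^2 = (r^2 - x^2)/r^2 := by field_simp
    rw [this, Real.sqrt_div hpos.le, Real.sqrt_sq hr.le]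
  rw [h1]
  set t := Real.sqrt (r^2 - x^2) with htdef
  have ht : t^2 = r^2 - x^2 := Real.sq_sqrt hpos.le
  have htne : t ≠ 0 := hsq.ne'
  field_simp
  linear_combination ht

theorem key_integral (r c : ℝ) (hr : 0 < r) (hc : 0 ≤ c) (hcr : c ≤ r) :
    ∫ x in c..r, Real.sqrt (r^2 - x^2) =
      r^2 * Real.arccos (c/r) / 2 - c * Real.sqrt (r^2 - c^2) / 2 := by
  set F := fun x : ℝ => (x * Real.sqrt (r^2 - x^2) + r^2 * Real.arcsin (x/r))/2 with hFdef
  have hcont : ContinuousOn F (Set.Icc c r) := by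
    apply Continuous.continuousOn
    exact ((continuous_id.mul ((continuous_const.sub (continuous_pow 2)).sqrt)).add
      (continuous_const.mul (Real.continuous_arcsin.comp (continuous_id.div_const r)))).div_const 2
  have hint : IntervalIntegrable (fun x => Real.sqrt (r^2 - x^2)) volume c r := by
    exact ((continuous_const.sub (continuous_pow 2)).sqrt).intervalIntegrable _ _
  have := intervalIntegral.integral_eq_sub_of_hasDeriv_right_of_le hcr hcont
    (fun x hx => (key_deriv r c hr x (by cases hx; linarith) hx.2).hasDerivWithinAt) hint
  rw [this, hFdef]
  simp only
  rw [div_self hr.ne', Real.arcsin_one, Real.arccos_eq_pi_div_two_sub_arcsin]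
  have : Real.sqrt (r^2 - r^2) = 0 := by simp
  rw [this]
  ring

theorem slice_vol (m : ℝ) : volume {y : ℝ | y^2 ≤ m} = ENNReal.ofReal (2 * Real.sqrt m) := by
  rcases le_or_gt 0 m with hm | hm
  · have h0 : {y : ℝ | y^2 ≤ m} = Set.Icc (-Real.sqrt m) (Real.sqrt m) := by
      ext y
      simp only [Set.mem_setOf_eq, Set.mem_Icc]
      constructor
      · intro h
        have h1 : Real.sqrt (y^2) ≤ Real.sqrt m := Real.sqrt_le_sqrt h
        rw [Real.sqrt_sq_eq_abs] at h1
        exact abs_le.mp h1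
      · rintro ⟨h1, h2⟩
        nlinarith [Real.sq_sqrt hm, abs_le.mpr ⟨h1, h2⟩, sq_abs y, neg_abs_le y, le_abs_self y]
    rw [h0, Real.volume_Icc]
    congr 1; ring
  · have h0 : {y : ℝ | y^2 ≤ m} = ∅ := by
      ext y; simp only [Set.mem_setOf_eq, Set.mem_empty_iff_false, iff_false, not_le]
      nlinarith [sq_nonneg y]
    rw [h0, Real.sqrt_eq_zero'.mpr hm.le]
    simp

theorem planar_area (r D : ℝ) (hr : 0 < r) (hD0 : 0 ≤ D) (hD : D ≤ 2*r) :
    volume {p : ℝ × ℝ | p.1^2 + p.2^2 ≤ r^2 ∧ (p.1 - D)^2 + p.2^2 ≤ r^2} =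
      ENNReal.ofReal (2 * r^2 * Real.arccos (D/(2*r)) - D * Real.sqrt (r^2 - (D/2)^2)) := by
  set g : ℝ → ℝ := fun x => 2 * Real.sqrt (min (r^2 - x^2) (r^2 - (x - D)^2)) with hg
  have hScl : IsClosed {p : ℝ × ℝ | p.1^2 + p.2^2 ≤ r^2 ∧ (p.1 - D)^2 + p.2^2 ≤ r^2} := by
    apply IsClosed.inter
    · exact isClosed_le ((continuous_fst.pow 2).add (continuous_snd.pow 2)) continuous_const
    · exact isClosed_le (((continuous_fst.sub continuous_const).pow 2).add (continuous_snd.pow 2)) continuous_const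
  have hSm := hScl.measurableSet
  -- slices
  have hslice : ∀ x : ℝ, volume (Prod.mk x ⁻¹' {p : ℝ × ℝ | p.1^2 + p.2^2 ≤ r^2 ∧ (p.1 - D)^2 + p.2^2 ≤ r^2})
      = ENNReal.ofReal (g x) := by
    intro x
    have : Prod.mk x ⁻¹' {p : ℝ × ℝ | p.1^2 + p.2^2 ≤ r^2 ∧ (p.1 - D)^2 + p.2^2 ≤ r^2}
        = {y : ℝ | y^2 ≤ min (r^2 - x^2) (r^2 - (x - D)^2)} := by
      ext y; simp only [Set.mem_preimage, Set.mem_setOf_eq, le_min_iff]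
      constructor <;> rintro ⟨h1, h2⟩ <;> constructor <;> linarith
    rw [this, slice_vol]
  have hcg : Continuous g := by
    apply Continuous.mul continuous_const
    exact ((continuous_const.sub (continuous_pow 2)).min
      ((continuous_const.sub ((continuous_id.sub continuous_const).pow 2)))).sqrt
  have hgnn : ∀ x, 0 ≤ g x := fun x => by positivity
  have hsupp : Function.support g ⊆ Set.Icc (D - r) r := by
    intro x hx
    simp only [Function.mem_support, hg] at hx
    by_contra hmem
    simp only [Set.mem_Icc, not_and_or, not_le] at hmem
    apply hx
    rcases hmem with h | h
    · have : r^2 - (x - D)^2 ≤ 0 := by nlinarith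
      rw [Real.sqrt_eq_zero'.mpr (le_trans (min_le_right _ _) this), mul_zero]
    · have : r^2 - x^2 ≤ 0 := by nlinarith
      rw [Real.sqrt_eq_zero'.mpr (le_trans (min_le_left _ _) this), mul_zero]
  have hDr : D - r ≤ r := by linarith
  have hD2 : D - r ≤ D/2 := by linarith
  have hD2r : D/2 ≤ r := by linarith
  have hInt : Integrable g := by
    apply hcg.integrable_of_hasCompactSupport
    exact HasCompactSupport.intro isCompact_Icc fun x hx => by
      by_contra h; exact hx (hsupp h)
  -- volume as lintegral of slices
  rw [Measure.volume_eq_prod, Measure.prod_apply hSm]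
  simp_rw [hslice]
  rw [← ofReal_integral_eq_lintegral_ofReal hInt (Filter.Eventually.of_forall hgnn)]
  congr 1
  have hsupp' : Function.support g ⊆ Set.Ioc (D - r) r := by
    intro x hx
    simp only [Function.mem_support, hg] at hx
    have hmin : 0 < min (r^2 - x^2) (r^2 - (x - D)^2) := by
      by_contra h
      push_neg at h
      rw [Real.sqrt_eq_zero'.mpr h, mul_zero] at hx
      exact hx rfl
    have h1 : 0 < r^2 - x^2 := lt_of_lt_of_le hmin (min_le_left _ _)
    have h2 : 0 < r^2 - (x - D)^2 := lt_of_lt_of_le hmin (min_le_right _ _)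
    constructor <;> nlinarith
  rw [← intervalIntegral.integral_eq_integral_of_support_subset hsupp']
  have hii : ∀ u v : ℝ, IntervalIntegrable g volume u v := fun u v => hcg.intervalIntegrable u v
  rw [← intervalIntegral.integral_add_adjacent_intervals (b := D/2) (hii _ _) (hii _ _)]
  have hval : (∫ x in (D/2)..r, (fun u => 2 * Real.sqrt (r^2 - u^2)) x)
      = 2 * (r^2 * Real.arccos (D/(2*r)) / 2 - (D/2) * Real.sqrt (r^2 - (D/2)^2) / 2) := by
    simp only
    rw [intervalIntegral.integral_const_mul, key_integral r (D/2) hr (by linarith) hD2r]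
    have : (D/2)/r = D/(2*r) := by ring
    rw [this]
  have hp2 : (∫ x in (D/2)..r, g x)
      = 2 * (r^2 * Real.arccos (D/(2*r)) / 2 - (D/2) * Real.sqrt (r^2 - (D/2)^2) / 2) := by
    rw [← hval]
    apply intervalIntegral.integral_congr
    intro x hx
    rw [Set.uIcc_of_le hD2r] at hx
    simp only [hg]
    congr 1
    exact congrArg _ (min_eq_left (by nlinarith [hx.1, hx.2]))
  have hp1 : (∫ x in (D-r)..(D/2), g x)
      = 2 * (r^2 * Real.arccos (D/(2*r)) / 2 - (D/2) * Real.sqrt (r^2 - (D/2)^2) / 2) := by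
    have e1 : (∫ x in (D-r)..(D/2), g x)
        = ∫ x in (D-r)..(D/2), (fun u => 2 * Real.sqrt (r^2 - u^2)) (x - D) := by
      apply intervalIntegral.integral_congr
      intro x hx
      rw [Set.uIcc_of_le hD2] at hx
      simp only [hg]
      congr 1
      exact congrArg _ (min_eq_right (by nlinarith [hx.1, hx.2]))
    rw [e1, intervalIntegral.integral_comp_sub_right (fun u => 2 * Real.sqrt (r^2 - u^2)) D]
    have e2 : D - r - D = -r := by ring
    have e3 : D/2 - D = -(D/2) := by ring
    rw [e2, e3]
    have e4 : (∫ x in (D/2)..r, (fun u => 2 * Real.sqrt (r^2 - u^2)) (-x))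
        = ∫ x in -r..(-(D/2)), (fun u => 2 * Real.sqrt (r^2 - u^2)) x :=
      intervalIntegral.integral_comp_neg (fun u => 2 * Real.sqrt (r^2 - u^2))
    rw [← e4]
    simp only [neg_sq]
    exact hval
  rw [hp1, hp2]
  ring

theorem lens_reduce (a b : EuclideanSpace ℝ (Fin 2)) (r D : ℝ) (hr : 0 < r) (hab : a ≠ b)
    (hDdef : D = dist a b) :
    volume ({x : EuclideanSpace ℝ (Fin 2) | dist a x ≤ r} ∩
        {x : EuclideanSpace ℝ (Fin 2) | dist b x ≤ r}) =
      volume {p : ℝ × ℝ | p.1^2 + p.2^2 ≤ r^2 ∧ (p.1 - D)^2 + p.2^2 ≤ r^2} := by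
  have hD0 : 0 < D := hDdef ▸ dist_pos.mpr hab
  set u : EuclideanSpace ℝ (Fin 2) := D⁻¹ • (b - a) with hu
  have hbma : ‖b - a‖ = D := by rw [hDdef, dist_eq_norm, norm_sub_rev]
  have hunorm : ‖u‖ = 1 := by
    rw [hu, norm_smul, hbma, norm_inv, Real.norm_of_nonneg hD0.le, inv_mul_cancel₀ hD0.ne']
  have husq : u 0 ^ 2 + u 1 ^ 2 = 1 := by
    have h := hunorm
    rw [EuclideanSpace.norm_eq] at h
    have h2 : (∑ i : Fin 2, ‖u i‖ ^ 2) = 1 := Real.sqrt_eq_one.mp h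
    simpa [Fin.sum_univ_two, Real.norm_eq_abs, sq_abs] using h2
  set v : EuclideanSpace ℝ (Fin 2) := (WithLp.equiv 2 _).symm ![-(u 1), u 0] with hv
  have hv0 : v 0 = -(u 1) := rfl
  have hv1 : v 1 = u 0 := rfl
  set f : Fin 2 → EuclideanSpace ℝ (Fin 2) := ![u, v] with hf
  have hon : Orthonormal ℝ f := by
    rw [orthonormal_iff_ite]
    intro i j
    fin_cases i <;> fin_cases j <;>
      simp [hf, PiLp.inner_apply, Fin.sum_univ_two, RCLike.inner_apply, hv0, hv1,
        starRingEnd_apply, -inner_self_eq_norm_sq_to_K] <;> ring_nf <;> nlinarith [husq]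
  have hspan : ⊤ ≤ Submodule.span ℝ (Set.range f) := by
    rw [hon.linearIndependent.span_eq_top_of_card_eq_finrank (by simp)]
  set B : OrthonormalBasis (Fin 2) ℝ (EuclideanSpace ℝ (Fin 2)) := OrthonormalBasis.mk hon hspan with hB
  have hBu : B.repr u = EuclideanSpace.single 0 1 := by
    have : u = B 0 := by rw [hB, OrthonormalBasis.coe_mk]; rfl
    rw [this, OrthonormalBasis.repr_self]
  have hba : b - a = D • u := by
    rw [hu, smul_smul, mul_inv_cancel₀ hD0.ne', one_smul]
  set φ : EuclideanSpace ℝ (Fin 2) → ℝ × ℝ :=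
    (MeasurableEquiv.finTwoArrow ∘ (MeasurableEquiv.toLp 2 (Fin 2 → ℝ)).symm) ∘
      (fun x => B.repr (x - a)) with hφ
  have hmp : MeasurePreserving φ volume volume := by
    refine MeasurePreserving.comp (μb := volume) ?_ ?_
    · exact (volume_preserving_finTwoArrow ℝ).comp (EuclideanSpace.volume_preserving_symm_measurableEquiv_toLp (Fin 2))
    · exact B.measurePreserving_repr.comp (measurePreserving_sub_right volume a)
  have hφx : ∀ x : EuclideanSpace ℝ (Fin 2), φ x = (B.repr (x - a) 0, B.repr (x - a) 1) := by
    intro x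
    rfl
  have hnorm_iff : ∀ w : EuclideanSpace ℝ (Fin 2), (‖w‖ ≤ r ↔ w 0 ^ 2 + w 1 ^ 2 ≤ r ^ 2) := by
    intro w
    rw [EuclideanSpace.norm_eq, Fin.sum_univ_two, Real.norm_eq_abs, Real.norm_eq_abs, sq_abs, sq_abs,
      Real.sqrt_le_left hr.le]
  have hreprba : B.repr (b - a) = D • EuclideanSpace.single 0 1 := by
    rw [hba, _root_.map_smul, hBu]
  have hset : ({x : EuclideanSpace ℝ (Fin 2) | dist a x ≤ r} ∩
      {x : EuclideanSpace ℝ (Fin 2) | dist b x ≤ r}) =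
      φ ⁻¹' {p : ℝ × ℝ | p.1^2 + p.2^2 ≤ r^2 ∧ (p.1 - D)^2 + p.2^2 ≤ r^2} := by
    ext x
    simp only [Set.mem_inter_iff, Set.mem_setOf_eq, Set.mem_preimage, hφx]
    have h1 : dist a x = ‖B.repr (x - a)‖ := by
      rw [B.repr.norm_map, dist_comm, dist_eq_norm]
    have h2 : dist b x = ‖B.repr (x - a) - B.repr (b - a)‖ := by
      rw [← _root_.map_sub, B.repr.norm_map, dist_comm, dist_eq_norm]
      congr 1
      abel
    rw [hreprba] at h2
    set w : EuclideanSpace ℝ (Fin 2) := B.repr (x - a) with hw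
    set c : EuclideanSpace ℝ (Fin 2) := D • EuclideanSpace.single 0 1 with hc
    have e0 : (w - c) 0 = w 0 - D := by
      simp [hc, PiLp.sub_apply, PiLp.smul_apply, EuclideanSpace.single_apply]
    have e1 : (w - c) 1 = w 1 := by
      simp [hc, PiLp.sub_apply, PiLp.smul_apply, EuclideanSpace.single_apply]
    rw [h1, h2, hnorm_iff, hnorm_iff, e0, e1]
  rw [hset, hmp.measure_preimage]
  apply MeasurableSet.nullMeasurableSet
  apply IsClosed.measurableSet
  apply IsClosed.inter
  · exact isClosed_le ((continuous_fst.pow 2).add (continuous_snd.pow 2)) continuous_const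
  · exact isClosed_le (((continuous_fst.sub continuous_const).pow 2).add (continuous_snd.pow 2)) continuous_const

open Real MeasureTheory in
/-- Lens area: if `0 < ω ≤ D ≤ 2r` with `D = d(a,b)` and `θ = arccos (D/(2r))`, the area of
the intersection of the two closed disks of radius `r` around `a` and `b` is
`2r²(θ - sin θ cos θ)`. -/
theorem stmt_8 (a b : EuclideanSpace ℝ (Fin 2)) (r ω : ℝ) (hr : 0 < r)
    (hω : 0 < ω) (hωD : ω ≤ dist a b) (hD : dist a b ≤ 2 * r) :
    volume ({x : EuclideanSpace ℝ (Fin 2) | dist a x ≤ r} ∩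
        {x : EuclideanSpace ℝ (Fin 2) | dist b x ≤ r}) =
      ENNReal.ofReal (2 * r ^ 2 *
        (Real.arccos (dist a b / (2 * r)) -
          Real.sin (Real.arccos (dist a b / (2 * r))) *
            Real.cos (Real.arccos (dist a b / (2 * r))))) := by
  set D : ℝ := dist a b with hDdef
  have hD0 : 0 < D := lt_of_lt_of_le hω hωD
  have hab : a ≠ b := fun h => by rw [hDdef, h, dist_self] at hD0; exact lt_irrefl 0 hD0
  rw [lens_reduce a b r D hr hab hDdef, planar_area r D hr hD0.le hD]
  congr 1
  have h1 : Real.cos (Real.arccos (D / (2*r))) = D / (2*r) :=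
    Real.cos_arccos (by positivity |> le_trans (by norm_num : (-1:ℝ) ≤ 0)) (by
      rw [div_le_one (by positivity)]; exact hD)
  have h2 : Real.sin (Real.arccos (D / (2*r))) = Real.sqrt (1 - (D/(2*r))^2) :=
    Real.sin_arccos _
  rw [h1, h2]
  have h3 : Real.sqrt (r^2 - (D/2)^2) = r * Real.sqrt (1 - (D/(2*r))^2) := by
    have : r^2 - (D/2)^2 = r^2 * (1 - (D/(2*r))^2) := by
      field_simp
    rw [this, Real.sqrt_mul (sq_nonneg r), Real.sqrt_sq hr.le]
  rw [h3]
  field_simp
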